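/- Assume θ ≤ min(−ψ₁, ψ₂). Then for every α > 0: ψ₀ₐ(s) ≥ (ψ₁ − θ − s)²/(2α) for every s ≤ ψ₁ − θ, and ψ₀ₐ(s) ≥ (s − ψ₂ − θ)²/(2α) for every s ≥ ψ₂ + θ. -/

import Mathlib

open MeasureTheory

/-- The metric projection of `ℝ` onto the interval `K = [ψ₁, ψ₂]`. -/
noncomputable def projK (ψ₁ ψ₂ s : ℝ) : ℝ := max ψ₁ (min s ψ₂)

/-- The Yosida approximation `γ_α(s) = (1/α)(s − proj_K(s))`. -/
noncomputable def yosida (ψ₁ ψ₂ α s : ℝ) : ℝ := (1 / α) * (s - projK ψ₁ ψ₂ s)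

/-- The rescaled mollifier `ζ_ε(s) = (1/ε)·ζ(s/ε)`. -/
noncomputable def scaledMollifier (ζ : ℝ → ℝ) (ε s : ℝ) : ℝ := (1 / ε) * ζ (s / ε)

/-- The mollified Yosida approximation `γ̃_α = γ_α * ζ_θ` (convolution over `ℝ`
with respect to Lebesgue measure). -/
noncomputable def mollifiedYosida (ψ₁ ψ₂ α θ : ℝ) (ζ : ℝ → ℝ) (s : ℝ) : ℝ :=
  ∫ t, yosida ψ₁ ψ₂ α (s - t) * scaledMollifier ζ θ t

/-- The regularized potential `ψ₀ₐ(s) = ∫₀ˢ γ̃_α(t) dt`. -/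
noncomputable def regPotential (ψ₁ ψ₂ α θ : ℝ) (ζ : ℝ → ℝ) (s : ℝ) : ℝ :=
  ∫ t in (0 : ℝ)..s, mollifiedYosida ψ₁ ψ₂ α θ ζ t

section Aux

open scoped Convolution

lemma continuous_yosida (ψ₁ ψ₂ α : ℝ) : Continuous (yosida ψ₁ ψ₂ α) := by
  unfold yosida projK
  fun_prop

lemma continuous_scaledMollifier {ζ : ℝ → ℝ} (hζ : Continuous ζ) (θ : ℝ) :
    Continuous (scaledMollifier ζ θ) := by
  unfold scaledMollifier
  fun_prop

lemma scaledMollifier_support {ζ : ℝ → ℝ} (hζsupp : Function.support ζ ⊆ Set.Icc (-1) 1)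
    {θ : ℝ} (hθ : 0 < θ) : Function.support (scaledMollifier ζ θ) ⊆ Set.Icc (-θ) θ := by
  intro t ht
  have h : ζ (t / θ) ≠ 0 := by
    intro h
    apply ht
    simp [scaledMollifier, h]
  have := hζsupp h
  obtain ⟨h1, h2⟩ := this
  constructor
  · nlinarith [(div_le_one hθ).mp h2, (le_div_iff₀ hθ).mp h1]
  · nlinarith [(div_le_one hθ).mp h2]

lemma scaledMollifier_nonneg {ζ : ℝ → ℝ} (hζ0 : ∀ t, 0 ≤ ζ t) {θ : ℝ} (hθ : 0 < θ) (t : ℝ) :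
    0 ≤ scaledMollifier ζ θ t :=
  mul_nonneg (by positivity) (hζ0 _)

lemma scaledMollifier_integral {ζ : ℝ → ℝ} (hζint : ∫ t, ζ t = 1) {θ : ℝ} (hθ : 0 < θ) :
    ∫ t, scaledMollifier ζ θ t = 1 := by
  unfold scaledMollifier
  rw [MeasureTheory.integral_const_mul, MeasureTheory.Measure.integral_comp_div ζ θ, hζint,
    abs_of_pos hθ, smul_eq_mul]
  field_simp

lemma hasCompactSupport_scaledMollifier {ζ : ℝ → ℝ}
    (hζsupp : Function.support ζ ⊆ Set.Icc (-1) 1) {θ : ℝ} (hθ : 0 < θ) :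
    HasCompactSupport (scaledMollifier ζ θ) :=
  HasCompactSupport.intro isCompact_Icc fun x hx => by
    by_contra h
    exact hx (scaledMollifier_support hζsupp hθ h)

lemma projK_le {ψ₁ ψ₂ x : ℝ} (hx : ψ₁ ≤ x) : projK ψ₁ ψ₂ x ≤ x :=
  max_le hx (min_le_left _ _)

lemma le_projK {ψ₁ ψ₂ x : ℝ} (hx : x ≤ ψ₂) : x ≤ projK ψ₁ ψ₂ x :=
  le_trans (le_min le_rfl hx) (le_max_right _ _)

lemma yosida_nonneg {ψ₁ ψ₂ α x : ℝ} (hα : 0 < α) (hx : ψ₁ ≤ x) : 0 ≤ yosida ψ₁ ψ₂ α x :=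
  mul_nonneg (by positivity) (by linarith [projK_le (ψ₂ := ψ₂) hx])

lemma yosida_nonpos {ψ₁ ψ₂ α x : ℝ} (hα : 0 < α) (hx : x ≤ ψ₂) : yosida ψ₁ ψ₂ α x ≤ 0 :=
  mul_nonpos_of_nonneg_of_nonpos (by positivity) (by linarith [le_projK (ψ₁ := ψ₁) hx])

lemma yosida_eq_right {ψ₁ ψ₂ α x : ℝ} (hψ : ψ₁ ≤ ψ₂) (hx : ψ₂ ≤ x) :
    yosida ψ₁ ψ₂ α x = (1 / α) * (x - ψ₂) := by
  unfold yosida projK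
  rw [min_eq_right hx, max_eq_right hψ]

lemma yosida_eq_left {ψ₁ ψ₂ α x : ℝ} (hψ : ψ₁ ≤ ψ₂) (hx : x ≤ ψ₁) :
    yosida ψ₁ ψ₂ α x = (1 / α) * (x - ψ₁) := by
  unfold yosida projK
  rw [min_eq_left (le_trans hx hψ), max_eq_left hx]

variable {ψ₁ ψ₂ θ α : ℝ} {ζ : ℝ → ℝ}

lemma mollifiedYosida_eq_conv :
    mollifiedYosida ψ₁ ψ₂ α θ ζ =
      (scaledMollifier ζ θ) ⋆[ContinuousLinearMap.mul ℝ ℝ] (yosida ψ₁ ψ₂ α) := by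
  ext x
  unfold mollifiedYosida convolution
  simp only [ContinuousLinearMap.mul_apply']
  simp_rw [mul_comm]

lemma continuous_mollifiedYosida (hζ : Continuous ζ)
    (hζsupp : Function.support ζ ⊆ Set.Icc (-1) 1) (hθ : 0 < θ) :
    Continuous (mollifiedYosida ψ₁ ψ₂ α θ ζ) := by
  rw [mollifiedYosida_eq_conv]
  exact (hasCompactSupport_scaledMollifier hζsupp hθ).continuous_convolution_left _
    (continuous_scaledMollifier hζ θ) ((continuous_yosida ψ₁ ψ₂ α).locallyIntegrable)

lemma integrable_aux (hζ : Continuous ζ) (hζsupp : Function.support ζ ⊆ Set.Icc (-1) 1)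
    (hθ : 0 < θ) (s : ℝ) :
    Integrable (fun t => yosida ψ₁ ψ₂ α (s - t) * scaledMollifier ζ θ t) := by
  apply Continuous.integrable_of_hasCompactSupport
  · exact ((continuous_yosida ψ₁ ψ₂ α).comp (by fun_prop)).mul (continuous_scaledMollifier hζ θ)
  · apply HasCompactSupport.intro (isCompact_Icc (a := -θ) (b := θ))
    intro x hx
    have : scaledMollifier ζ θ x = 0 := by
      by_contra h
      exact hx (scaledMollifier_support hζsupp hθ h)
    simp [this]

lemma integrable_smul_mollifier (hζ : Continuous ζ)
    (hζsupp : Function.support ζ ⊆ Set.Icc (-1) 1) (hθ : 0 < θ) (c : ℝ) :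
    Integrable (fun t => c * scaledMollifier ζ θ t) := by
  apply Continuous.integrable_of_hasCompactSupport
  · exact continuous_const.mul (continuous_scaledMollifier hζ θ)
  · apply HasCompactSupport.intro (isCompact_Icc (a := -θ) (b := θ))
    intro x hx
    have : scaledMollifier ζ θ x = 0 := by
      by_contra h
      exact hx (scaledMollifier_support hζsupp hθ h)
    simp [this]

end Aux

/-- Quadratic growth of the regularized potential outside the shifted interval
(the coercivity property making the regularization of Definition 7.1 satisfy
condition 2 of Theorem 3.8): if `θ ≤ min(−ψ₁, ψ₂)`, then for every `α > 0`,
`ψ₀ₐ(s) ≥ (ψ₁ − θ − s)²/(2α)` for `s ≤ ψ₁ − θ` and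
`ψ₀ₐ(s) ≥ (s − ψ₂ − θ)²/(2α)` for `s ≥ ψ₂ + θ`. -/
theorem regPotential_quadratic_growth
    (ψ₁ ψ₂ θ : ℝ) (hψ₁ : ψ₁ < 0) (hψ₂ : 0 < ψ₂) (hθ : 0 < θ)
    (hθmin : θ ≤ min (-ψ₁) ψ₂)
    (ζ : ℝ → ℝ) (hζC : ContDiff ℝ 1 ζ)
    (hζsupp : Function.support ζ ⊆ Set.Icc (-1) 1)
    (hζint : ∫ t, ζ t = 1) (hζ0 : ∀ t, 0 ≤ ζ t) (hζ1 : ∀ t, ζ t ≤ 1) :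
    ∀ α, 0 < α →
      (∀ s, s ≤ ψ₁ - θ → (ψ₁ - θ - s) ^ 2 / (2 * α) ≤ regPotential ψ₁ ψ₂ α θ ζ s) ∧
      (∀ s, ψ₂ + θ ≤ s → (s - ψ₂ - θ) ^ 2 / (2 * α) ≤ regPotential ψ₁ ψ₂ α θ ζ s) := by
  intro α hα
  have hζ : Continuous ζ := hζC.continuous
  have hψ : ψ₁ ≤ ψ₂ := le_of_lt (lt_trans hψ₁ hψ₂)
  have hθ₁ : θ ≤ -ψ₁ := le_trans hθmin (min_le_left _ _)
  have hθ₂ : θ ≤ ψ₂ := le_trans hθmin (min_le_right _ _)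
  have hcont : Continuous (mollifiedYosida ψ₁ ψ₂ α θ ζ) :=
    continuous_mollifiedYosida hζ hζsupp hθ
  -- pointwise sign of mollified Yosida
  have hnonneg : ∀ s : ℝ, 0 ≤ s → 0 ≤ mollifiedYosida ψ₁ ψ₂ α θ ζ s := by
    intro s hs
    apply MeasureTheory.integral_nonneg
    intro t
    by_cases h : scaledMollifier ζ θ t = 0
    · simp [h]
    · have ht := scaledMollifier_support hζsupp hθ h
      have : ψ₁ ≤ s - t := by
        have := ht.2
        linarith
      exact mul_nonneg (yosida_nonneg hα this) (scaledMollifier_nonneg hζ0 hθ t)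
  have hnonpos : ∀ s : ℝ, s ≤ 0 → mollifiedYosida ψ₁ ψ₂ α θ ζ s ≤ 0 := by
    intro s hs
    apply MeasureTheory.integral_nonpos
    intro t
    by_cases h : scaledMollifier ζ θ t = 0
    · simp [h]
    · have ht := scaledMollifier_support hζsupp hθ h
      have : s - t ≤ ψ₂ := by
        have := ht.1
        linarith
      exact mul_nonpos_of_nonpos_of_nonneg (yosida_nonpos hα this)
        (scaledMollifier_nonneg hζ0 hθ t)
  -- lower bound on the right
  have hlow : ∀ s : ℝ, ψ₂ + θ ≤ s →
      (s - ψ₂ - θ) / α ≤ mollifiedYosida ψ₁ ψ₂ α θ ζ s := by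
    intro s hs
    have key : ∫ t, ((s - ψ₂ - θ) / α) * scaledMollifier ζ θ t ≤
        mollifiedYosida ψ₁ ψ₂ α θ ζ s := by
      apply MeasureTheory.integral_mono
        (integrable_smul_mollifier hζ hζsupp hθ _) (integrable_aux hζ hζsupp hθ s)
      intro t
      dsimp only
      by_cases h : scaledMollifier ζ θ t = 0
      · simp [h]
      · have ht := scaledMollifier_support hζsupp hθ h
        have h2 : ψ₂ ≤ s - t := by linarith [ht.1, ht.2]
        rw [yosida_eq_right hψ h2]
        apply mul_le_mul_of_nonneg_right _ (scaledMollifier_nonneg hζ0 hθ t)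
        have heq : (1 / α) * (s - t - ψ₂) = (s - t - ψ₂) / α := by ring
        rw [heq]
        exact (div_le_div_iff_of_pos_right hα).mpr (by linarith [ht.1, ht.2])
    calc (s - ψ₂ - θ) / α = ((s - ψ₂ - θ) / α) * ∫ t, scaledMollifier ζ θ t := by
          rw [scaledMollifier_integral hζint hθ]; ring
      _ = ∫ t, ((s - ψ₂ - θ) / α) * scaledMollifier ζ θ t := by
          rw [MeasureTheory.integral_const_mul]
      _ ≤ _ := key
  -- upper bound on the left
  have hup : ∀ s : ℝ, s ≤ ψ₁ - θ →
      mollifiedYosida ψ₁ ψ₂ α θ ζ s ≤ (s - ψ₁ + θ) / α := by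
    intro s hs
    have key : mollifiedYosida ψ₁ ψ₂ α θ ζ s ≤
        ∫ t, ((s - ψ₁ + θ) / α) * scaledMollifier ζ θ t := by
      apply MeasureTheory.integral_mono
        (integrable_aux hζ hζsupp hθ s) (integrable_smul_mollifier hζ hζsupp hθ _)
      intro t
      dsimp only
      by_cases h : scaledMollifier ζ θ t = 0
      · simp [h]
      · have ht := scaledMollifier_support hζsupp hθ h
        have h2 : s - t ≤ ψ₁ := by linarith [ht.1, ht.2]
        rw [yosida_eq_left hψ h2]
        apply mul_le_mul_of_nonneg_right _ (scaledMollifier_nonneg hζ0 hθ t)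
        have heq : (1 / α) * (s - t - ψ₁) = (s - t - ψ₁) / α := by ring
        rw [heq]
        exact (div_le_div_iff_of_pos_right hα).mpr (by linarith [ht.1, ht.2])
    calc mollifiedYosida ψ₁ ψ₂ α θ ζ s ≤ ∫ t, ((s - ψ₁ + θ) / α) * scaledMollifier ζ θ t := key
      _ = ((s - ψ₁ + θ) / α) * ∫ t, scaledMollifier ζ θ t := by
          rw [MeasureTheory.integral_const_mul]
      _ = (s - ψ₁ + θ) / α := by rw [scaledMollifier_integral hζint hθ]; ring
  constructor
  · -- left branch
    intro s hs
    set b := ψ₁ - θ with hb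
    have hb0 : b ≤ 0 := by simp only [hb]; linarith
    have hsb : s ≤ b := hs
    have hsplit : regPotential ψ₁ ψ₂ α θ ζ s = -((∫ t in s..b, mollifiedYosida ψ₁ ψ₂ α θ ζ t)
        + ∫ t in b..(0:ℝ), mollifiedYosida ψ₁ ψ₂ α θ ζ t) := by
      unfold regPotential
      rw [intervalIntegral.integral_symm s (0:ℝ),
        ← intervalIntegral.integral_add_adjacent_intervals
          (hcont.intervalIntegrable s b) (hcont.intervalIntegrable b 0)]
    rw [hsplit]
    have h2 : ∫ t in b..(0:ℝ), mollifiedYosida ψ₁ ψ₂ α θ ζ t ≤ 0 := by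
      have h2' : 0 ≤ ∫ t in b..(0:ℝ), -mollifiedYosida ψ₁ ψ₂ α θ ζ t :=
        intervalIntegral.integral_nonneg hb0 (fun u hu => by
          simpa using hnonpos u hu.2)
      rw [intervalIntegral.integral_neg] at h2'
      linarith
    have h1 : ∫ t in s..b, mollifiedYosida ψ₁ ψ₂ α θ ζ t ≤
        -((ψ₁ - θ - s) ^ 2 / (2 * α)) := by
      have hmono : ∫ t in s..b, mollifiedYosida ψ₁ ψ₂ α θ ζ t ≤
          ∫ t in s..b, (1/α) * (t - b) := by
        apply intervalIntegral.integral_mono_on hsb (hcont.intervalIntegrable _ _)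
          (by apply Continuous.intervalIntegrable; fun_prop)
        intro u hu
        have := hup u hu.2
        calc mollifiedYosida ψ₁ ψ₂ α θ ζ u ≤ (u - ψ₁ + θ) / α := this
          _ = (1/α) * (u - b) := by rw [hb]; ring
      refine le_trans hmono (le_of_eq ?_)
      rw [intervalIntegral.integral_const_mul, intervalIntegral.integral_sub
        (by apply Continuous.intervalIntegrable; fun_prop)
        (intervalIntegrable_const), integral_id,
        intervalIntegral.integral_const]
      have : ψ₁ - θ - s = b - s := by rw [hb]
      rw [this]
      field_simp
      ring
    linarith
  · -- right branch
    intro s hs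
    have hb0 : (0:ℝ) ≤ ψ₂ + θ := by linarith
    have hsplit : regPotential ψ₁ ψ₂ α θ ζ s =
        (∫ t in (0:ℝ)..(ψ₂+θ), mollifiedYosida ψ₁ ψ₂ α θ ζ t)
        + ∫ t in (ψ₂+θ)..s, mollifiedYosida ψ₁ ψ₂ α θ ζ t := by
      rw [regPotential, intervalIntegral.integral_add_adjacent_intervals
        (hcont.intervalIntegrable 0 (ψ₂+θ)) (hcont.intervalIntegrable (ψ₂+θ) s)]
    rw [hsplit]
    have h1 : 0 ≤ ∫ t in (0:ℝ)..(ψ₂+θ), mollifiedYosida ψ₁ ψ₂ α θ ζ t := by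
      apply intervalIntegral.integral_nonneg hb0
      intro u hu
      exact hnonneg u hu.1
    have h2 : (s - ψ₂ - θ) ^ 2 / (2 * α) ≤
        ∫ t in (ψ₂+θ)..s, mollifiedYosida ψ₁ ψ₂ α θ ζ t := by
      have hmono : ∫ t in (ψ₂+θ)..s, (t - ψ₂ - θ) / α ≤
          ∫ t in (ψ₂+θ)..s, mollifiedYosida ψ₁ ψ₂ α θ ζ t := by
        apply intervalIntegral.integral_mono_on hs
          (by apply Continuous.intervalIntegrable; fun_prop)
          (hcont.intervalIntegrable _ _)
        intro u hu
        exact hlow u hu.1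
      refine le_trans (le_of_eq ?_) hmono
      have : ∀ t, (t - ψ₂ - θ) / α = (1/α) * (t - (ψ₂ + θ)) := by intro t; ring
      simp_rw [this]
      rw [intervalIntegral.integral_const_mul, intervalIntegral.integral_sub
        (by apply Continuous.intervalIntegrable; fun_prop)
        (intervalIntegrable_const), integral_id,
        intervalIntegral.integral_const]
      field_simp
      ring
    linarith
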